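/- Let m and n be natural numbers and let \(\alpha\) be a rational number with \(\alpha\neq 0\), \(\alpha\neq -1\), and \(\alpha m+n\neq 0\). Then \(\sum_{k=0}^{\min\{m,n\}} k\,\binom{(1+\alpha)m}{m-k}\binom{(1+\alpha^{-1})n}{n-k}=\frac{mn}{(1+\alpha)(m+\alpha^{-1}n)}\binom{(1+\alpha)m}{m}\binom{(1+\alpha^{-1})n}{n}\). -/
import Mathlib

set_option maxHeartbeats 1000000

/-- The generalized binomial coefficient `x(x-1)⋯(x-k+1)/k!` for a rational `x`
and a natural number `k`. -/
noncomputable def qbinom (x : ℚ) (k : ℕ) : ℚ :=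
  (∏ i ∈ Finset.range k, (x - (i : ℚ))) / (Nat.factorial k : ℚ)

lemma qbinom_succ (x : ℚ) (j : ℕ) :
    qbinom x (j + 1) = qbinom x j * (x - j) / (j + 1) := by
  have h2 : (Nat.factorial j : ℚ) ≠ 0 := Nat.cast_ne_zero.mpr (Nat.factorial_ne_zero j)
  simp only [qbinom, Finset.prod_range_succ, Nat.factorial_succ]
  push_cast
  rw [div_mul_eq_mul_div, div_div, mul_comm ((j : ℚ) + 1)]

/-- The telescoping certificate. -/
noncomputable def cc (α x y : ℚ) (k : ℕ) : ℚ :=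
  (α * (k : ℚ) ^ 2 + (α ^ 2 * x + y) * k + α * x * y) / ((1 + α) * (α * x + y))

/-- The purely algebraic certificate identity. -/
lemma cert (α x y : ℚ) (k : ℕ) (hα : α ≠ 0) (hα1 : (1 : ℚ) + α ≠ 0)
    (hd : α * x + y ≠ 0) (hj1 : x - k ≠ 0) (hl1 : y - k ≠ 0) :
    (k : ℚ) * (((1 + α) * x - (x - k - 1)) / (x - k)) *
        (((1 + α⁻¹) * y - (y - k - 1)) / (y - k)) =
      cc α x y k * (((1 + α) * x - (x - k - 1)) / (x - k)) *
        (((1 + α⁻¹) * y - (y - k - 1)) / (y - k)) - cc α x y (k + 1) := by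
  unfold cc
  push_cast
  field_simp
  ring

theorem guo_zeng_single_sum (m n : ℕ) (α : ℚ) (hα : α ≠ 0) (hα1 : α ≠ -1)
    (h : α * m + n ≠ 0) :
    ∑ k ∈ Finset.Icc 0 (min m n),
      (k : ℚ) * qbinom ((1 + α) * m) (m - k) * qbinom ((1 + α⁻¹) * n) (n - k) =
    (m * n : ℚ) / ((1 + α) * (m + α⁻¹ * n)) *
      qbinom ((1 + α) * m) m * qbinom ((1 + α⁻¹) * n) n := by
  have hα1' : (1 : ℚ) + α ≠ 0 := by
    intro hc; apply hα1; linarith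
  have hD0 : (1 + α) * (α * (m : ℚ) + n) ≠ 0 := mul_ne_zero hα1' h
  set M := min m n with hM
  set T : ℕ → ℚ := fun k =>
    cc α m n k * qbinom ((1 + α) * m) (m - k) * qbinom ((1 + α⁻¹) * n) (n - k) with hT
  -- pointwise telescoping for k < M
  have key : ∀ k < M,
      (k : ℚ) * qbinom ((1 + α) * m) (m - k) * qbinom ((1 + α⁻¹) * n) (n - k)
        = T k - T (k + 1) := by
    intro k hk
    have hkm : k + 1 ≤ m := lt_min_iff.mp hk |>.1
    have hkn : k + 1 ≤ n := lt_min_iff.mp hk |>.2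
    set j := m - (k + 1) with hj
    set l := n - (k + 1) with hl
    have hmj : m - k = j + 1 := by omega
    have hnl : n - k = l + 1 := by omega
    have hjq : (j : ℚ) = (m : ℚ) - k - 1 := by
      rw [hj]; push_cast [hkm]; ring
    have hlq : (l : ℚ) = (n : ℚ) - k - 1 := by
      rw [hl]; push_cast [hkn]; ring
    have hmk : ((m : ℚ) - k) ≠ 0 := by
      have : (k : ℚ) < m := by exact_mod_cast hkm
      intro hc; linarith
    have hnk : ((n : ℚ) - k) ≠ 0 := by
      have : (k : ℚ) < n := by exact_mod_cast hkn
      intro hc; linarith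
    have hjq1 : ((j : ℚ) + 1) = (m : ℚ) - k := by rw [hjq]; ring
    have hlq1 : ((l : ℚ) + 1) = (n : ℚ) - k := by rw [hlq]; ring
    have e := cert α m n k hα hα1' h hmk hnk
    show _ = cc α m n k * qbinom ((1 + α) * m) (m - k) * qbinom ((1 + α⁻¹) * n) (n - k)
      - cc α m n (k + 1) * qbinom ((1 + α) * m) (m - (k + 1)) *
        qbinom ((1 + α⁻¹) * n) (n - (k + 1))
    rw [hmj, hnl, ← hj, ← hl, qbinom_succ, qbinom_succ, hjq1, hlq1, hjq, hlq]
    linear_combination (qbinom ((1 + α) * m) j * qbinom ((1 + α⁻¹) * n) l) * e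
  -- cc at M equals M
  have hcM : cc α m n M = (M : ℚ) := by
    unfold cc
    rw [hM]
    rcases min_cases m n with ⟨h1, _⟩ | ⟨h1, _⟩ <;> rw [h1] <;>
      · rw [div_eq_iff hD0]; ring
  have hIcc : Finset.Icc 0 M = Finset.range (M + 1) := by
    ext x; simp [Nat.lt_succ_iff]
  rw [hIcc, Finset.sum_range_succ]
  have hsum : ∑ k ∈ Finset.range M,
      (k : ℚ) * qbinom ((1 + α) * m) (m - k) * qbinom ((1 + α⁻¹) * n) (n - k)
      = T 0 - T M := by
    rw [← Finset.sum_range_sub' T]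
    exact Finset.sum_congr rfl fun k hk => key k (Finset.mem_range.mp hk)
  rw [hsum]
  have hT0 : T 0 = (m * n : ℚ) / ((1 + α) * ((m : ℚ) + α⁻¹ * n)) *
      qbinom ((1 + α) * m) m * qbinom ((1 + α⁻¹) * n) n := by
    show cc α m n 0 * qbinom ((1 + α) * m) (m - 0) * qbinom ((1 + α⁻¹) * n) (n - 0) = _
    rw [Nat.sub_zero, Nat.sub_zero]
    have h2 : ((m : ℚ) + α⁻¹ * n) ≠ 0 := by
      have heq : (m : ℚ) + α⁻¹ * n = α⁻¹ * (α * m + n) := by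
        rw [mul_add, ← mul_assoc, inv_mul_cancel₀ hα, one_mul]
      rw [heq]
      exact mul_ne_zero (inv_ne_zero hα) h
    have hc0 : cc α m n 0 = (m * n : ℚ) / ((1 + α) * ((m : ℚ) + α⁻¹ * n)) := by
      unfold cc
      push_cast
      rw [div_eq_div_iff hD0 (mul_ne_zero hα1' h2)]
      field_simp
      ring
    rw [hc0]
  have hTM : T M = (M : ℚ) * qbinom ((1 + α) * m) (m - M) * qbinom ((1 + α⁻¹) * n) (n - M) := by
    show cc α m n M * _ * _ = _
    rw [hcM]
  rw [hT0, hTM]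
  ring
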